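/- Let a < b be real numbers, let I = [a, b], and let u : ℝ → ℝ be continuously differentiable on I. Then for every x ∈ I one has exp(|u(x)|) ≤ (∫_a^b exp(|u(s)|) ds) · (∫_a^b u'(s)² ds) + 2(b−a)^{−1} ∫_a^b exp(|u(s)|) ds; equivalently, ‖exp(|u|)‖_{L^∞(I)} ≤ ‖exp(|u|)‖_{L¹(I)} ‖u'‖_{L²(I)}² + 2·ℒ¹(I)^{−1}‖exp(|u|)‖_{L¹(I)}. -/
import Mathlib


open MeasureTheory Set

lemma ftc_exp_aux (a b y x : ℝ) (hy : y ∈ Set.Icc a b) (hx : x ∈ Set.Icc a b) (hyx : y ≤ x)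
    (v v' : ℝ → ℝ)
    (hderiv : ∀ t ∈ Set.Icc a b, HasDerivWithinAt v (v' t) (Set.Icc a b) t)
    (hcont : ContinuousOn v' (Set.Icc a b)) :
    Real.exp (v x) - Real.exp (v y) = ∫ s in y..x, Real.exp (v s) * v' s := by
  have hsub : Set.Icc y x ⊆ Set.Icc a b := Set.Icc_subset_Icc hy.1 hx.2
  have hvc : ContinuousOn v (Set.Icc a b) := fun t ht => (hderiv t ht).continuousWithinAt
  have hec : ContinuousOn (fun s => Real.exp (v s)) (Set.Icc y x) :=
    Real.continuous_exp.comp_continuousOn (hvc.mono hsub)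
  have hint : IntervalIntegrable (fun s => Real.exp (v s) * v' s) volume y x := by
    apply ContinuousOn.intervalIntegrable
    rw [Set.uIcc_of_le hyx]
    exact hec.mul (hcont.mono hsub)
  refine (intervalIntegral.integral_eq_sub_of_hasDeriv_right_of_le hyx hec ?_ hint).symm
  intro t ht
  have htab : t ∈ Set.Ioo a b := ⟨lt_of_le_of_lt hy.1 ht.1, lt_of_lt_of_le ht.2 hx.2⟩
  have hd : HasDerivAt v (v' t) t :=
    (hderiv t (Set.Ioo_subset_Icc_self htab)).hasDerivAt (Icc_mem_nhds htab.1 htab.2)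
  exact hd.exp.hasDerivWithinAt

-- one-sided estimate: exp (v x) ≤ exp (v y) + ∫_a^b |u'| exp|u|
lemma exp_est_aux (a b : ℝ) (hab : a < b) (u u' v v' : ℝ → ℝ)
    (hderiv : ∀ t ∈ Set.Icc a b, HasDerivWithinAt v (v' t) (Set.Icc a b) t)
    (hcont : ContinuousOn v' (Set.Icc a b))
    (hcontu : ContinuousOn u' (Set.Icc a b))
    (hcontuu : ContinuousOn u (Set.Icc a b))
    (hbound : ∀ s ∈ Set.Icc a b, |Real.exp (v s) * v' s| ≤ |u' s| * Real.exp |u s|)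
    (x : ℝ) (hx : x ∈ Set.Icc a b) (y : ℝ) (hy : y ∈ Set.Icc a b) :
    Real.exp (v x) ≤ Real.exp (v y) + ∫ s in a..b, |u' s| * Real.exp |u s| := by
  have hgint : IntervalIntegrable (fun s => |u' s| * Real.exp |u s|) volume a b := by
    apply ContinuousOn.intervalIntegrable
    rw [Set.uIcc_of_le hab.le]
    exact hcontu.abs.mul (Real.continuous_exp.comp_continuousOn hcontuu.abs)
  have hpos : ∀ s ∈ Set.Ioc a b, 0 ≤ |u' s| * Real.exp |u s| := fun s _ =>
    mul_nonneg (abs_nonneg _) (Real.exp_pos _).le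
  have hposae : 0 ≤ᵐ[volume.restrict (Set.Ioc a b)] fun s => |u' s| * Real.exp |u s| := by
    filter_upwards [ae_restrict_mem measurableSet_Ioc] with s hs using hpos s hs
  -- generic: for c ≤ d in [a,b], |∫ c..d exp(v)*v'| ≤ ∫ a..b |u'| exp|u|
  have key : ∀ c d : ℝ, c ∈ Set.Icc a b → d ∈ Set.Icc a b → c ≤ d →
      |∫ s in c..d, Real.exp (v s) * v' s| ≤ ∫ s in a..b, |u' s| * Real.exp |u s| := by
    intro c d hc hd hcd
    have hsub : Set.Icc c d ⊆ Set.Icc a b := Set.Icc_subset_Icc hc.1 hd.2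
    have hvint : IntervalIntegrable (fun s => Real.exp (v s) * v' s) volume c d := by
      apply ContinuousOn.intervalIntegrable
      rw [Set.uIcc_of_le hcd]
      exact ((Real.continuous_exp.comp_continuousOn
        ((fun t ht => (hderiv t ht).continuousWithinAt : ContinuousOn v (Set.Icc a b)))).mul
        hcont).mono hsub
    calc |∫ s in c..d, Real.exp (v s) * v' s|
        ≤ ∫ s in c..d, |Real.exp (v s) * v' s| :=
          intervalIntegral.abs_integral_le_integral_abs hcd
      _ ≤ ∫ s in c..d, |u' s| * Real.exp |u s| := by
          apply intervalIntegral.integral_mono_on hcd hvint.abs (hgint.mono_set ?_)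
          · exact fun s hs => hbound s (hsub hs)
          · rw [Set.uIcc_of_le hcd, Set.uIcc_of_le hab.le]; exact hsub
      _ ≤ ∫ s in a..b, |u' s| * Real.exp |u s| :=
          intervalIntegral.integral_mono_interval hc.1 hcd hd.2 hposae hgint
  rcases le_total y x with hxy | hxy
  · have := ftc_exp_aux a b y x hy hx hxy v v' hderiv hcont
    have h2 := key y x hy hx hxy
    rw [← this] at h2
    have := le_abs_self (Real.exp (v x) - Real.exp (v y))
    linarith
  · have := ftc_exp_aux a b x y hx hy hxy v v' hderiv hcont
    have h2 := key x y hx hy hxy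
    rw [← this] at h2
    have := neg_abs_le (Real.exp (v y) - Real.exp (v x))
    linarith


/-- One-dimensional exponential sup-bound (Lemma 3.2, estimate (3.11) of the paper),
for continuously differentiable functions. -/
theorem oneD_exponential_bound
    (a b : ℝ) (hab : a < b)
    (u u' : ℝ → ℝ)
    (hderiv : ∀ x ∈ Set.Icc a b, HasDerivWithinAt u (u' x) (Set.Icc a b) x)
    (hcont : ContinuousOn u' (Set.Icc a b)) :
    ∀ x ∈ Set.Icc a b,
      Real.exp |u x| ≤
        (∫ s in a..b, Real.exp |u s|) * (∫ s in a..b, (u' s) ^ 2)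
          + 2 * (b - a)⁻¹ * ∫ s in a..b, Real.exp |u s| := by
  have hba : (0:ℝ) < b - a := sub_pos.mpr hab
  have hcu : ContinuousOn u (Set.Icc a b) := fun t ht => (hderiv t ht).continuousWithinAt
  set g : ℝ → ℝ := fun s => Real.exp |u s| with hgdef
  have hcg : ContinuousOn g (Set.Icc a b) := Real.continuous_exp.comp_continuousOn hcu.abs
  set B : ℝ := ∫ s in a..b, g s with hBdef
  set A : ℝ := ∫ s in a..b, (u' s)^2 with hAdef
  set J : ℝ := ∫ s in a..b, |u' s| * g s with hJdef
  have hgint : IntervalIntegrable g volume a b := by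
    apply ContinuousOn.intervalIntegrable; rwa [Set.uIcc_of_le hab.le]
  have hsqint : IntervalIntegrable (fun s => (u' s)^2) volume a b := by
    apply ContinuousOn.intervalIntegrable; rw [Set.uIcc_of_le hab.le]; exact hcont.pow 2
  have hsqgint : IntervalIntegrable (fun s => (u' s)^2 * g s) volume a b := by
    apply ContinuousOn.intervalIntegrable; rw [Set.uIcc_of_le hab.le]
    exact (hcont.pow 2).mul hcg
  -- key pointwise inequality
  have key : ∀ x ∈ Set.Icc a b, ∀ y ∈ Set.Icc a b, g x ≤ g y + J := by
    intro x hx y hy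
    have h1 : Real.exp (u x) ≤ Real.exp (u y) + J := by
      refine exp_est_aux a b hab u u' u u' hderiv hcont hcont hcu ?_ x hx y hy
      intro s _
      rw [abs_mul, abs_of_pos (Real.exp_pos _), mul_comm]
      exact mul_le_mul_of_nonneg_left (Real.exp_le_exp.mpr (le_abs_self _)) (abs_nonneg _)
    have h2 : Real.exp (-u x) ≤ Real.exp (-u y) + J := by
      refine exp_est_aux a b hab u u' (fun s => -u s) (fun s => -u' s)
        (fun t ht => (hderiv t ht).neg) hcont.neg hcont hcu ?_ x hx y hy
      intro s _
      rw [abs_mul, abs_of_pos (Real.exp_pos _), abs_neg, mul_comm]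
      exact mul_le_mul_of_nonneg_left (Real.exp_le_exp.mpr (neg_le_abs _)) (abs_nonneg _)
    have hy1 : Real.exp (u y) ≤ g y := Real.exp_le_exp.mpr (le_abs_self _)
    have hy2 : Real.exp (-u y) ≤ g y := Real.exp_le_exp.mpr (neg_le_abs _)
    rcases abs_cases (u x) with ⟨h, _⟩ | ⟨h, _⟩
    · show Real.exp |u x| ≤ _; rw [h]; linarith
    · show Real.exp |u x| ≤ _; rw [h]; linarith
  -- averaged inequality
  have avg : ∀ x ∈ Set.Icc a b, g x ≤ (b - a)⁻¹ * B + J := by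
    intro x hx
    have hmono : ∫ (_ : ℝ) in a..b, g x ≤ ∫ y in a..b, (g y + J) := by
      apply intervalIntegral.integral_mono_on hab.le intervalIntegrable_const
        (hgint.add intervalIntegrable_const)
      exact fun y hy => key x hx y hy
    rw [intervalIntegral.integral_const, intervalIntegral.integral_add hgint
      intervalIntegrable_const, intervalIntegral.integral_const, smul_eq_mul, smul_eq_mul] at hmono
    have hinv : (b - a) * (b - a)⁻¹ = 1 := mul_inv_cancel₀ hba.ne'
    have hBeq : (∫ y in a..b, g y) = B := rfl
    rw [hBeq] at hmono
    have h' : (b - a) * g x ≤ (b - a) * ((b - a)⁻¹ * B + J) := by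
      rw [mul_add, ← mul_assoc, hinv, one_mul]; linarith
    exact le_of_mul_le_mul_left h' hba
  -- maximizer
  obtain ⟨x₀, hx₀, hmax⟩ := isCompact_Icc.exists_isMaxOn (Set.nonempty_Icc.mpr hab.le) hcu.abs
  set M : ℝ := g x₀ with hMdef
  have hM : ∀ s ∈ Set.Icc a b, g s ≤ M := fun s hs => Real.exp_le_exp.mpr (hmax hs)
  have hMpos : 0 < M := Real.exp_pos _
  have hA0 : 0 ≤ A := intervalIntegral.integral_nonneg hab.le (fun s _ => sq_nonneg _)
  have hB0 : b - a ≤ B := by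
    have : ∫ (_ : ℝ) in a..b, (1:ℝ) ≤ B := by
      apply intervalIntegral.integral_mono_on hab.le intervalIntegrable_const hgint
      exact fun s _ => Real.one_le_exp (abs_nonneg _)
    simpa using this
  have hBpos : 0 < B := lt_of_lt_of_le hba hB0
  -- J bound
  have hJb : ∀ c : ℝ, 0 < c → J ≤ M * A / (2 * c) + c * B / 2 := by
    intro c hc
    have hstep1 : J ≤ ∫ s in a..b, ((u' s)^2 * g s / (2 * c) + c * g s / 2) := by
      apply intervalIntegral.integral_mono_on hab.le
      · apply ContinuousOn.intervalIntegrable; rw [Set.uIcc_of_le hab.le]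
        exact hcont.abs.mul hcg
      · exact (hsqgint.div_const _).add ((hgint.const_mul c).div_const 2)
      · intro s _
        have hg0 : 0 < g s := Real.exp_pos _
        have h2 : (u' s)^2 = |u' s|^2 := (sq_abs _).symm
        have h3 : 0 ≤ |u' s| := abs_nonneg _
        rw [div_add_div _ _ (by positivity : (2*c : ℝ) ≠ 0) (two_ne_zero), le_div_iff₀ (by positivity)]
        nlinarith [sq_nonneg (|u' s| - c), mul_pos hg0 hc]
    have hstep2 : ∫ s in a..b, (u' s)^2 * g s ≤ M * A := by
      have : ∫ s in a..b, (u' s)^2 * g s ≤ ∫ s in a..b, (u' s)^2 * M := by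
        apply intervalIntegral.integral_mono_on hab.le hsqgint (hsqint.mul_const M)
        exact fun s hs => mul_le_mul_of_nonneg_left (hM s hs) (sq_nonneg _)
      rwa [intervalIntegral.integral_mul_const, mul_comm] at this
    have hlin : ∫ s in a..b, ((u' s)^2 * g s / (2 * c) + c * g s / 2)
        = (∫ s in a..b, (u' s)^2 * g s) / (2 * c) + c * B / 2 := by
      rw [intervalIntegral.integral_add (hsqgint.div_const _) ((hgint.const_mul c).div_const 2),
        intervalIntegral.integral_div]
      congr 1
      rw [intervalIntegral.integral_div, intervalIntegral.integral_const_mul]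
    calc J ≤ _ := hstep1
      _ = (∫ s in a..b, (u' s)^2 * g s) / (2 * c) + c * B / 2 := hlin
      _ ≤ M * A / (2 * c) + c * B / 2 := by gcongr
  -- conclude M bound
  have hMbound : M ≤ B * A + 2 * (b - a)⁻¹ * B := by
    rw [le_iff_forall_pos_lt_add]
    intro ε hε
    have hc : (0:ℝ) < A + ε / (2 * B) := by positivity
    have h1 := avg x₀ hx₀
    have h2 := hJb (A + ε / (2 * B)) hc
    -- M ≤ (b-a)⁻¹ B + M*A/(2(A+ε')) + (A+ε')B/2
    have hfrac : M * A / (2 * (A + ε / (2 * B))) ≤ M / 2 := by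
      rw [div_le_div_iff₀ (by positivity) (by norm_num)]
      nlinarith [mul_pos hMpos (show (0:ℝ) < ε / (2 * B) by positivity)]
    have hB2 : (A + ε / (2 * B)) * B / 2 = A * B / 2 + ε / 4 := by
      field_simp; ring
    rw [← hMdef] at h1
    linarith [h1, h2, hfrac, hε]
  intro x hx
  calc Real.exp |u x| ≤ M := hM x hx
    _ ≤ B * A + 2 * (b - a)⁻¹ * B := hMbound
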